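/- Let Q be symmetric positive definite with lower triangular part Γ and all diagonal entries 1. Then the update matrix I − BΓ^{-1}Q of Gaussian back-substitution CD has the same eigenvalues as the symmetric matrix I − Γ^{-1}QΓ^{-T}, where B is the GBS correction matrix. -/

import Mathlib

open Matrix Polynomial Real

noncomputable def lowerTri {n : ℕ} (Q : Matrix (Fin n) (Fin n) ℝ) : Matrix (Fin n) (Fin n) ℝ :=
  fun i j => if j ≤ i then Q i j else 0

noncomputable def l2norm {n : ℕ} (M : Matrix (Fin n) (Fin n) ℝ) : ℝ :=
  ‖(Matrix.toEuclideanCLM (𝕜 := ℝ) M : EuclideanSpace ℝ (Fin n) →L[ℝ] EuclideanSpace ℝ (Fin n))‖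

noncomputable def specRad {n : ℕ} (M : Matrix (Fin n) (Fin n) ℝ) : ℝ :=
  sSup (Set.image (fun z : ℂ => ‖z‖) (spectrum ℂ (M.map (algebraMap ℝ ℂ))))

/-- Characteristic polynomial is invariant under conjugation. -/
lemma my_charpoly_conj {m : ℕ} (P A : Matrix (Fin m) (Fin m) ℝ) (hP : IsUnit P.det) :
    (P * A * P⁻¹).charpoly = A.charpoly := by
  have hPP : P * P⁻¹ = 1 := mul_nonsing_inv P hP
  have hmap : (P.map (C : ℝ →+* ℝ[X])) * ((P⁻¹).map C) = 1 := by
    rw [← Matrix.map_mul, hPP, Matrix.map_one _ (map_zero C) (map_one C)]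
  have key : charmatrix (P * A * P⁻¹) = P.map C * charmatrix A * (P⁻¹).map C := by
    rw [charmatrix, charmatrix]
    rw [Matrix.mul_sub, Matrix.sub_mul]
    congr 1
    · rw [(Matrix.scalar_commute (X : ℝ[X]) (Commute.all X) (P.map C)).symm.eq, mul_assoc, hmap,
        mul_one]
    · simp only [RingHom.mapMatrix_apply, ← Matrix.map_mul]
  rw [Matrix.charpoly, Matrix.charpoly, key, det_mul, det_mul]
  have h1 : (P.map (C : ℝ →+* ℝ[X])).det * ((P⁻¹).map C).det = 1 := by
    rw [← det_mul, hmap, det_one]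
  calc (P.map C).det * (charmatrix A).det * ((P⁻¹).map C).det
      = (charmatrix A).det * ((P.map C).det * ((P⁻¹).map C).det) := by ring
    _ = (charmatrix A).det := by rw [h1, mul_one]

/-- Two matrices with equal zero-padded first columns which agree outside row 0 have the same
characteristic polynomial. -/
lemma my_charpoly_col {m : ℕ} (A D : Matrix (Fin (m+1)) (Fin (m+1)) ℝ)
    (hA0 : ∀ i, i ≠ 0 → A i 0 = 0) (hD0 : ∀ i, i ≠ 0 → D i 0 = 0)
    (h00 : A 0 0 = D 0 0) (h : ∀ i j, i ≠ 0 → A i j = D i j) :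
    A.charpoly = D.charpoly := by
  rw [Matrix.charpoly, Matrix.charpoly, det_succ_column_zero, det_succ_column_zero]
  refine Finset.sum_congr rfl fun i _ => ?_
  by_cases hi : i = 0
  · subst hi
    congr 1
    congr 1
    · rw [charmatrix_apply_eq, charmatrix_apply_eq, h00]
    · congr 1
      ext k l
      simp only [submatrix_apply, Fin.succAbove_zero]
      have hk : (Fin.succ k : Fin (m+1)) ≠ 0 := Fin.succ_ne_zero k
      by_cases hkl : (Fin.succ k : Fin (m+1)) = Fin.succ l
      · rw [hkl] at hk ⊢
        rw [charmatrix_apply_eq, charmatrix_apply_eq, h _ _ hk]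
      · rw [charmatrix_apply_ne _ _ _ hkl, charmatrix_apply_ne _ _ _ hkl, h _ _ hk]
  · have h1 : charmatrix A i 0 = 0 := by
      rw [charmatrix_apply_ne _ _ _ hi, hA0 i hi, map_zero, neg_zero]
    have h2 : charmatrix D i 0 = 0 := by
      rw [charmatrix_apply_ne _ _ _ hi, hD0 i hi, map_zero, neg_zero]
    simp [h1, h2]

/-- The GBS-CD update matrix I - BΓ⁻¹Q has the same eigenvalues as the symmetric matrix
I - Γ⁻¹QΓ⁻ᵀ. -/
theorem stmt7 {n : ℕ} (Q Γ B : Matrix (Fin (n + 1)) (Fin (n + 1)) ℝ)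
    (hQsym : Q.IsSymm) (hQpd : Q.PosDef) (hdiag : ∀ i, Q i i = 1)
    (hΓ : Γ = lowerTri Q)
    (hB : ∀ i j, B i j = if i = 0 then (if j = 0 then (1 : ℝ) else 0)
        else if j = 0 then 0 else (Γ⁻¹)ᵀ i j) :
    (1 - B * Γ⁻¹ * Q).charpoly = (1 - Γ⁻¹ * Q * (Γᵀ)⁻¹).charpoly := by
  -- Γ is unit lower triangular, hence det Γ = 1
  have hΓdet : Γ.det = 1 := by
    have htri : Γ.BlockTriangular OrderDual.toDual := by
      intro i j hij
      simp only [hΓ, lowerTri]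
      rw [if_neg (by exact not_le.mpr hij)]
    rw [Matrix.det_of_lowerTriangular Γ htri]
    have : ∀ i, Γ i i = 1 := fun i => by simp [hΓ, lowerTri, hdiag]
    simp [this]
  have hU : IsUnit Γ.det := by rw [hΓdet]; exact isUnit_one
  have hGG : Γ * Γ⁻¹ = 1 := mul_nonsing_inv Γ hU
  have hGG' : Γ⁻¹ * Γ = 1 := nonsing_inv_mul Γ hU
  -- column 0 of Γ equals column 0 of Q
  have f1 : ∀ i, Γ i 0 = Q i 0 := fun i => by simp [hΓ, lowerTri, Fin.zero_le]
  -- row 0 of Γ is e₀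
  have f2 : ∀ j, Γ 0 j = if j = 0 then 1 else 0 := by
    intro j
    simp only [hΓ, lowerTri]
    by_cases hj : j = 0
    · subst hj; simp [hdiag]
    · rw [if_neg hj, if_neg (by rwa [Fin.le_zero_iff])]
  -- column 0 of Γ⁻¹Q is e₀
  have f3 : ∀ i, (Γ⁻¹ * Q) i 0 = if i = 0 then 1 else 0 := by
    intro i
    have h : (Γ⁻¹ * Q) i 0 = (Γ⁻¹ * Γ) i 0 := by
      simp only [mul_apply, f1]
    rw [h, hGG', one_apply]
  -- row 0 of Γ⁻¹ is e₀
  have f4 : ∀ j, Γ⁻¹ 0 j = if j = 0 then 1 else 0 := by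
    intro j
    have h := congrFun (congrFun hGG 0) j
    rw [mul_apply] at h
    simp only [f2, ite_mul, one_mul, zero_mul] at h
    rw [Finset.sum_ite_eq' (Finset.univ : Finset (Fin (n+1))) 0 (fun k => Γ⁻¹ k j),
      if_pos (Finset.mem_univ _)] at h
    rw [h, one_apply]
    simp [eq_comm]
  have htr : (Γᵀ)⁻¹ = (Γ⁻¹)ᵀ := (transpose_nonsing_inv Γ).symm
  -- column 0 of (Γᵀ)⁻¹ is e₀
  have f5 : ∀ i, (Γᵀ)⁻¹ i 0 = if i = 0 then 1 else 0 := by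
    intro i; rw [htr, transpose_apply, f4]
  set P := Γ⁻¹ * Q with hP
  have hPdet : IsUnit P.det := by
    rw [hP, det_mul]
    exact (isUnit_nonsing_inv_det Γ hU).mul (isUnit_iff_ne_zero.mpr hQpd.det_pos.ne')
  have hPP : P * P⁻¹ = 1 := mul_nonsing_inv P hPdet
  -- column 0 of B is e₀
  have hBcol : ∀ k, B k 0 = if k = 0 then 1 else 0 := by
    intro k; rw [hB]; by_cases hk : k = 0 <;> simp [hk]
  -- column 0 of P * B is e₀
  have hPB0 : ∀ i, (P * B) i 0 = if i = 0 then 1 else 0 := by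
    intro i
    rw [mul_apply]
    simp only [hBcol, mul_ite, mul_one, mul_zero]
    rw [Finset.sum_ite_eq' (Finset.univ : Finset (Fin (n+1))) 0 (fun k => P i k),
      if_pos (Finset.mem_univ _)]
    exact f3 i
  -- column 0 of P * (Γᵀ)⁻¹ is e₀
  have hPG0 : ∀ i, (P * (Γᵀ)⁻¹) i 0 = if i = 0 then 1 else 0 := by
    intro i
    rw [mul_apply]
    simp only [f5, mul_ite, mul_one, mul_zero]
    rw [Finset.sum_ite_eq' (Finset.univ : Finset (Fin (n+1))) 0 (fun k => P i k),
      if_pos (Finset.mem_univ _)]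
    exact f3 i
  -- conjugation step: 1 - B*P is similar to 1 - P*B
  have hconj : P * (1 - B * P) * P⁻¹ = 1 - P * B := by
    rw [Matrix.mul_sub, mul_one, Matrix.sub_mul, hPP]
    congr 1
    rw [mul_assoc P (B * P) P⁻¹, mul_assoc B P P⁻¹, hPP, mul_one]
  have step1 : (1 - B * Γ⁻¹ * Q).charpoly = (1 - P * B).charpoly := by
    have h : 1 - B * Γ⁻¹ * Q = 1 - B * P := by rw [hP, mul_assoc]
    rw [h, ← hconj, my_charpoly_conj P _ hPdet]
  -- P*B and P*(Γᵀ)⁻¹ agree outside row 0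
  have hrows : ∀ i j, i ≠ 0 → (P * B) i j = (P * (Γᵀ)⁻¹) i j := by
    intro i j hi
    rw [mul_apply, mul_apply]
    refine Finset.sum_congr rfl fun k _ => ?_
    by_cases hk : k = 0
    · subst hk
      have h : P i 0 = 0 := by rw [f3, if_neg hi]
      rw [h, zero_mul, zero_mul]
    · congr 1
      rw [hB, if_neg hk, htr]
      by_cases hj : j = 0
      · subst hj; rw [if_pos rfl, transpose_apply, f4, if_neg hk]
      · rw [if_neg hj]
  rw [step1]
  apply my_charpoly_col
  · intro i hi
    simp [Matrix.sub_apply, one_apply, hPB0, hi]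
  · intro i hi
    simp [Matrix.sub_apply, one_apply, hPG0, hi]
  · simp [Matrix.sub_apply, one_apply, hPB0, hPG0]
  · intro i j hi
    simp only [Matrix.sub_apply, hrows i j hi]
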